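/- Suppose the additional jump points s₁,…,s_m are added into the open intervals I_{α₁},…,I_{α_m} respectively, i.e. sᵢ ∈ I_{αᵢ} for i = 1,…,m. Let σ : ℝ → ℝ be a bijection such that both 𝒜 and 𝒜_S are invariant under σ and σ⁻¹. Then σ(⋃_{i=1}^m I_{αᵢ}) = ⋃_{i=1}^m I_{αᵢ}. -/
import Mathlib


open scoped Classical

noncomputable section

namespace PaperTRS

/-- The algebra of complex valued functions constant on each set of the family `P`. -/
def partAlg {X J : Type*} (P : J → Set X) : Subalgebra ℂ (X → ℂ) where
  carrier := {h | ∀ i, ∀ x ∈ P i, ∀ y ∈ P i, h x = h y}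
  mul_mem' := by
    intro a b ha hb i x hx y hy
    simp only [Pi.mul_apply, ha i x hx y hy, hb i x hx y hy]
  add_mem' := by
    intro a b ha hb i x hx y hy
    simp only [Pi.add_apply, ha i x hx y hy, hb i x hx y hy]
  algebraMap_mem' := by intro r i x hx y hy; rfl

/-- Piecewise constant functions on `ℝ` whose jumps all lie in the set `T`. -/
def pcAlgOn (T : Set ℝ) : Subalgebra ℂ (ℝ → ℂ) where
  carrier := {h | ∀ x y : ℝ, x ∉ T → y ∉ T →
    (∀ u ∈ T, u ∉ Set.Icc (min x y) (max x y)) → h x = h y}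
  mul_mem' := by
    intro a b ha hb x y hx hy hxy
    simp only [Pi.mul_apply, ha x y hx hy hxy, hb x y hx hy hxy]
  add_mem' := by
    intro a b ha hb x y hx hy hxy
    simp only [Pi.add_apply, ha x y hx hy hxy, hb x y hx hy hxy]
  algebraMap_mem' := by intro r x y _ _ _; rfl

/-- Invariance of an algebra of functions under a self-map of `X`. -/
def AlgInvariant {X : Type*} (A : Subalgebra ℂ (X → ℂ)) (σ : X → X) : Prop :=
  ∀ h ∈ A, (h ∘ σ) ∈ A

/-- `Sep A σ n = {x | ∃ h ∈ A, h x ≠ σ̃ⁿ(h) x}`, where `σ̃ⁿ(h) = h ∘ σ⁻ⁿ`. -/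
def Sep {X : Type*} (A : Subalgebra ℂ (X → ℂ)) (σ : Equiv.Perm X) (n : ℤ) : Set X :=
  {x | ∃ h ∈ A, h x ≠ h ((σ ^ n)⁻¹ x)}

/-- Twisted convolution product on the crossed product `⋊ ℤ`:
`(fₙ δⁿ) * (gₘ δᵐ) = fₙ · σ̃ⁿ(gₘ) · δ^{n+m}` extended bilinearly. -/
def cmul {X : Type*} (σ : Equiv.Perm X) (f g : ℤ →₀ (X → ℂ)) : ℤ →₀ (X → ℂ) :=
  f.sum fun n a => g.sum fun m b =>
    Finsupp.single (n + m) (fun x => a x * b ((σ ^ n)⁻¹ x))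

/-- Membership of an element `Σ fₙ δⁿ` in the crossed product of the algebra `B` with `ℤ`. -/
def InCrossed {X : Type*} (B : Subalgebra ℂ (X → ℂ)) (f : ℤ →₀ (X → ℂ)) : Prop :=
  ∀ n, f n ∈ B

/-- The commutant of `A` inside the crossed product `B ⋊ ℤ` (where `A ⊆ B`). -/
def commutant {X : Type*} (A B : Subalgebra ℂ (X → ℂ)) (σ : Equiv.Perm X) :
    Set (ℤ →₀ (X → ℂ)) :=
  {f | InCrossed B f ∧
    ∀ a ∈ A, cmul σ f (Finsupp.single 0 a) = cmul σ (Finsupp.single 0 a) f}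

/-- The jump points `t₁ < ⋯ < t_N` extended by `t₀ = -∞` and `t_{N+1} = +∞`. -/
def tE (N : ℕ) (t : Fin N → ℝ) (i : ℕ) : EReal :=
  if h : 1 ≤ i ∧ i ≤ N then ((t ⟨i - 1, by omega⟩ : ℝ) : EReal)
  else if i = 0 then ⊥ else ⊤

/-- The open interval `I_i = (t_i, t_{i+1})` for `0 ≤ i ≤ N`. -/
def openPiece (N : ℕ) (t : Fin N → ℝ) (i : ℕ) : Set ℝ :=
  {x : ℝ | tE N t i < (x : EReal) ∧ (x : EReal) < tE N t (i + 1)}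

/-- The sets of the partition of `ℝ` determined by the jump points: the open
intervals `I_0, …, I_N` together with the singletons `{t_i}`. -/
def pieces (N : ℕ) (t : Fin N → ℝ) : Set (Set ℝ) :=
  {P | (∃ i : ℕ, i ≤ N ∧ P = openPiece N t i) ∨ (∃ i : Fin N, P = {t i})}

/-- `C_k`: points `x` such that `k` is the smallest positive integer with `x` and
`σᵏ(x)` in one common set of the partition. -/
def Ck (N : ℕ) (t : Fin N → ℝ) (σ : Equiv.Perm ℝ) (k : ℕ) : Set ℝ :=
  {x | IsLeast {j : ℕ | 0 < j ∧ ∃ P ∈ pieces N t, x ∈ P ∧ (σ ^ j) x ∈ P} k}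

end PaperTRS
namespace PaperTRS

/-- With `p` points `s i 0 < ⋯ < s i (p-1)` added in the interval `I_{α i}`, the `j`-th
open subinterval of the refined partition of `I_{α i}`, for `j = 0, …, p`. -/
def subPiece (N : ℕ) (t : Fin N → ℝ) {k p : ℕ} (α : Fin k → ℕ)
    (s : Fin k → Fin p → ℝ) (i : Fin k) (j : Fin (p + 1)) : Set ℝ :=
  {x : ℝ |
    (if hj : (j : ℕ) = 0 then tE N t (α i)
      else ((s i ⟨(j : ℕ) - 1, by have := j.isLt; omega⟩ : ℝ) : EReal)) < (x : EReal) ∧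
    (x : EReal) <
      (if hj : (j : ℕ) = p then tE N t (α i + 1)
        else ((s i ⟨(j : ℕ), by have := j.isLt; omega⟩ : ℝ) : EReal))}

/-- The sets of the refined partition of the union of the intervals `I_{α i}`: the open
subintervals determined by the added jump points together with the singleton jump points. -/
def cyclePieces (N : ℕ) (t : Fin N → ℝ) {k p : ℕ} (α : Fin k → ℕ)
    (s : Fin k → Fin p → ℝ) : Set (Set ℝ) :=
  {P | (∃ i j, P = subPiece N t α s i j) ∨ (∃ i j, P = ({s i j} : Set ℝ))}

/-- `C̃_r`: points `x` of `⋃ᵢ I_{α i}` such that `r` is the smallest positive integer with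
`x` and `σʳ(x)` in one common set of the refined partition. -/
def Ctil (N : ℕ) (t : Fin N → ℝ) (σ : Equiv.Perm ℝ) {k p : ℕ} (α : Fin k → ℕ)
    (s : Fin k → Fin p → ℝ) (r : ℕ) : Set ℝ :=
  {x | x ∈ ⋃ i, openPiece N t (α i) ∧
    IsLeast {j : ℕ | 0 < j ∧ ∃ P ∈ cyclePieces N t α s, x ∈ P ∧ (σ ^ j) x ∈ P} r}

/-- The cyclic setup: `k` pairwise distinct open intervals `I_{α 0}, …, I_{α (k-1)}` of the
original partition, contained in `C_k` and permuted cyclically by `σ`, with `p` jump points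
`s i 0 < ⋯ < s i (p-1)` added into each of them, and both the original algebra `𝒜` and the
refined algebra `𝒜_S` invariant under `σ` and `σ⁻¹`. -/
def CyclicSetup (N : ℕ) (t : Fin N → ℝ) (σ : Equiv.Perm ℝ) {k p : ℕ} (α : Fin k → ℕ)
    (s : Fin k → Fin p → ℝ) : Prop :=
  0 < k ∧ (∀ i, α i ≤ N) ∧ Function.Injective α ∧
  (∀ i j, s i j ∈ openPiece N t (α i)) ∧ (∀ i, StrictMono (s i)) ∧
  (∀ i : Fin k, ∃ i' : Fin k, ((i' : ℕ) = ((i : ℕ) + 1) % k) ∧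
    σ '' openPiece N t (α i) = openPiece N t (α i')) ∧
  (∀ i, openPiece N t (α i) ⊆ Ck N t σ k) ∧
  AlgInvariant (pcAlgOn (Set.range t)) σ ∧
  AlgInvariant (pcAlgOn (Set.range t)) σ.symm ∧
  AlgInvariant (pcAlgOn (Set.range t ∪ ⋃ i, Set.range (s i))) σ ∧
  AlgInvariant (pcAlgOn (Set.range t ∪ ⋃ i, Set.range (s i))) σ.symm

/-- `C_k` for the partition `P` of a general set `X`. -/
def CkGen {X ι : Type*} (P : ι → Set X) (σ : Equiv.Perm X) (k : ℕ) : Set X :=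
  {x | IsLeast {j : ℕ | 0 < j ∧ ∃ i, x ∈ P i ∧ (σ ^ j) x ∈ P i} k}

/-- `C̃_r` relative to a family `Q` of refined pieces inside the subset `base` of `X`. -/
def CtilGen {X ι : Type*} (σ : Equiv.Perm X) (Q : ι → Set X) (base : Set X) (r : ℕ) :
    Set X :=
  {x | x ∈ base ∧ IsLeast {j : ℕ | 0 < j ∧ ∃ i, x ∈ Q i ∧ (σ ^ j) x ∈ Q i} r}

/-- `C_∞`: points that never return to the partition set they lie in. -/
def Cinf {X ι : Type*} (P : ι → Set X) (σ : Equiv.Perm X) : Set X :=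
  {x | ∀ k : ℕ, 0 < k → ¬∃ i, x ∈ P i ∧ (σ ^ k) x ∈ P i}

end PaperTRS
namespace PaperTRS

lemma mem_pcAlgOn_iff {W : Set ℝ} {h : ℝ → ℂ} :
    h ∈ pcAlgOn W ↔ ∀ x y : ℝ, x ∉ W → y ∉ W →
      (∀ u ∈ W, u ∉ Set.Icc (min x y) (max x y)) → h x = h y := Iff.rfl

lemma indicator_singleton_mem (W : Set ℝ) (u : ℝ) (hu : u ∈ W) :
    (fun x => if x = u then (1:ℂ) else 0) ∈ pcAlgOn W := by
  rw [mem_pcAlgOn_iff]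
  intro x y hx hy _
  rw [if_neg (by rintro rfl; exact hx hu), if_neg (by rintro rfl; exact hy hu)]

lemma indicator_Iio_mem (W : Set ℝ) (u : ℝ) (hu : u ∈ W) :
    (fun x => if x < u then (1:ℂ) else 0) ∈ pcAlgOn W := by
  rw [mem_pcAlgOn_iff]
  intro x y hx hy hxy
  have h := hxy u hu
  simp only [Set.mem_Icc, not_and_or, not_le, lt_min_iff, max_lt_iff] at h
  rcases h with ⟨h1, h2⟩ | ⟨h1, h2⟩
  · rw [if_neg (not_lt.mpr h1.le), if_neg (not_lt.mpr h2.le)]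
  · rw [if_pos h1, if_pos h2]

lemma sep_between (W : Set ℝ) (x y : ℝ) (hx : x ∉ W) (hy : y ∉ W) (u : ℝ) (hu : u ∈ W)
    (humem : u ∈ Set.Icc (min x y) (max x y)) :
    ∃ h ∈ pcAlgOn W, h x ≠ h y := by
  refine ⟨fun z => if z < u then (1:ℂ) else 0, indicator_Iio_mem W u hu, ?_⟩
  have hux : u ≠ x := fun h => hx (h ▸ hu)
  have huy : u ≠ y := fun h => hy (h ▸ hu)
  obtain ⟨hmin, hmax⟩ := humem
  rcases lt_trichotomy x y with hlt | heq | hlt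
  · have h1 : x < u := lt_of_le_of_ne (by rwa [min_eq_left hlt.le] at hmin) hux.symm
    have h2 : u < y := lt_of_le_of_ne (by rwa [max_eq_right hlt.le] at hmax) huy
    simp only [if_pos h1, if_neg (not_lt.mpr h2.le)]
    exact one_ne_zero
  · exfalso
    subst heq
    rw [min_self] at hmin; rw [max_self] at hmax
    exact hux (le_antisymm hmax hmin)
  · have h1 : y < u := lt_of_le_of_ne (by rwa [min_eq_right hlt.le] at hmin) huy.symm
    have h2 : u < x := lt_of_le_of_ne (by rwa [max_eq_left hlt.le] at hmax) hux
    simp only [if_pos h1, if_neg (not_lt.mpr h2.le)]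
    exact (one_ne_zero).symm

lemma exists_rel_point (W : Set ℝ) (hW : W.Finite) (v : ℝ) (hv : v ∉ W) :
    ∃ y, y ≠ v ∧ y ∉ W ∧ ∀ u ∈ W, u ∉ Set.Icc (min v y) (max v y) := by
  set A := insert (v+1) (W ∩ Set.Ioi v) with hA
  have hfin : A.Finite := (hW.inter_of_left _).insert _
  have hne : hfin.toFinset.Nonempty := ⟨v+1, by simp [hA]⟩
  set c := hfin.toFinset.min' hne with hc
  have hcA : c ∈ A := by
    have := hfin.toFinset.min'_mem hne
    rwa [Set.Finite.mem_toFinset] at this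
  have hcmin : ∀ b ∈ A, c ≤ b := fun b hb =>
    hfin.toFinset.min'_le b (by rwa [Set.Finite.mem_toFinset])
  have hvc : v < c := by
    rcases hcA with h | h
    · rw [h]; linarith
    · exact h.2
  have hy1 : v < (v + c) / 2 := by linarith
  have hy2 : (v + c) / 2 < c := by linarith
  refine ⟨(v + c) / 2, by intro h; rw [h] at hy1; linarith, ?_, ?_⟩
  · intro hmem
    have : c ≤ (v + c) / 2 := hcmin _ (Or.inr ⟨hmem, hy1⟩)
    linarith
  · intro u hu hmem
    rw [min_eq_left hy1.le, max_eq_right hy1.le] at hmem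
    obtain ⟨h1, h2⟩ := hmem
    have huv : v < u := lt_of_le_of_ne h1 (fun h => hv (h ▸ hu))
    have : c ≤ u := hcmin u (Or.inr ⟨hu, huv⟩)
    linarith

lemma maps_into (W : Set ℝ) (hW : W.Finite) (σ : Equiv.Perm ℝ)
    (hinv : AlgInvariant (pcAlgOn W) σ.symm) : ∀ u ∈ W, σ u ∈ W := by
  intro u hu
  by_contra hv
  obtain ⟨y, hyne, hyW, hsep⟩ := exists_rel_point W hW (σ u) hv
  have hrel : ∀ h ∈ pcAlgOn W, h (σ u) = h y := fun h hh =>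
    (mem_pcAlgOn_iff.mp hh) _ _ hv hyW hsep
  have hrel2 : ∀ h ∈ pcAlgOn W, h u = h (σ.symm y) := by
    intro h hh
    have := hrel (h ∘ σ.symm) (hinv h hh)
    simpa using this
  have heq := hrel2 _ (indicator_singleton_mem W u hu)
  have hne : σ.symm y ≠ u := by
    intro h
    apply hyne
    rw [← h, Equiv.apply_symm_apply]
  simp [hne] at heq

lemma t_not_mem_openPiece (N : ℕ) (t : Fin N → ℝ) (ht : StrictMono t)
    {i : ℕ} (hi : i ≤ N) (j : Fin N) : t j ∉ openPiece N t i := by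
  intro hmem
  obtain ⟨h1, h2⟩ := hmem
  have hjN := j.isLt
  by_cases h0 : 1 ≤ i
  · have e : tE N t i = ((t ⟨i-1, by omega⟩ : ℝ) : EReal) := by rw [tE, dif_pos ⟨h0, hi⟩]
    rw [e, EReal.coe_lt_coe_iff] at h1
    have hlow : (⟨i-1, by omega⟩ : Fin N) < j := ht.lt_iff_lt.mp h1
    rw [Fin.lt_def] at hlow
    simp only at hlow
    by_cases hN : i < N
    · have e2 : tE N t (i+1) = ((t ⟨i, by omega⟩ : ℝ) : EReal) := by
        rw [tE, dif_pos ⟨by omega, by omega⟩]; simp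
      rw [e2, EReal.coe_lt_coe_iff] at h2
      have hhigh : j < (⟨i, by omega⟩ : Fin N) := ht.lt_iff_lt.mp h2
      rw [Fin.lt_def] at hhigh
      simp only at hhigh
      omega
    · omega
  · have hN : i < N := by omega
    have e2 : tE N t (i+1) = ((t ⟨i, by omega⟩ : ℝ) : EReal) := by
      rw [tE, dif_pos ⟨by omega, by omega⟩]; simp
    rw [e2, EReal.coe_lt_coe_iff] at h2
    have hhigh : j < (⟨i, by omega⟩ : Fin N) := ht.lt_iff_lt.mp h2
    rw [Fin.lt_def] at hhigh
    simp only at hhigh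
    omega

lemma openPiece_convex (N : ℕ) (t : Fin N → ℝ) (i : ℕ) {a b c : ℝ}
    (ha : a ∈ openPiece N t i) (hb : b ∈ openPiece N t i)
    (hc : c ∈ Set.Icc (min a b) (max a b)) : c ∈ openPiece N t i := by
  obtain ⟨h1, h2⟩ := hc
  constructor
  · have hlow : tE N t i < ((min a b : ℝ) : EReal) := by
      rcases min_cases a b with ⟨h, _⟩ | ⟨h, _⟩ <;> rw [h]
      · exact ha.1
      · exact hb.1
    exact lt_of_lt_of_le hlow (EReal.coe_le_coe_iff.mpr h1)
  · have hhigh : ((max a b : ℝ) : EReal) < tE N t (i+1) := by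
      rcases max_cases a b with ⟨h, _⟩ | ⟨h, _⟩ <;> rw [h]
      · exact ha.2
      · exact hb.2
    exact lt_of_le_of_lt (EReal.coe_le_coe_iff.mpr h2) hhigh

lemma mem_openPiece_of_near (N : ℕ) (t : Fin N → ℝ) (i : ℕ) (hi : i ≤ N)
    (y x : ℝ) (hy : y ∈ openPiece N t i) (hx : x ∉ Set.range t)
    (hsep : ∀ u ∈ Set.range t, u ∉ Set.Icc (min x y) (max x y)) :
    x ∈ openPiece N t i := by
  obtain ⟨hy1, hy2⟩ := hy
  constructor
  · by_cases h0 : 1 ≤ i ∧ i ≤ N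
    · have e : tE N t i = ((t ⟨i-1, by omega⟩ : ℝ) : EReal) := by rw [tE, dif_pos h0]
      rw [e, EReal.coe_lt_coe_iff] at hy1
      rw [e, EReal.coe_lt_coe_iff]
      by_contra hle
      push_neg at hle
      exact hsep _ ⟨_, rfl⟩ ⟨(min_le_left x y).trans hle, hy1.le.trans (le_max_right x y)⟩
    · have hi0 : i = 0 := by omega
      subst hi0
      have e : tE N t 0 = ⊥ := by rw [tE, dif_neg h0, if_pos rfl]
      rw [e]
      exact EReal.bot_lt_coe x
  · by_cases hN : i < N
    · have e : tE N t (i+1) = ((t ⟨i, by omega⟩ : ℝ) : EReal) := by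
        rw [tE, dif_pos ⟨by omega, by omega⟩]; simp
      rw [e, EReal.coe_lt_coe_iff] at hy2
      rw [e, EReal.coe_lt_coe_iff]
      by_contra hle
      push_neg at hle
      exact hsep _ ⟨_, rfl⟩ ⟨(min_le_right x y).trans hy2.le, hle.trans (le_max_left x y)⟩
    · have e : tE N t (i+1) = ⊤ := by
        rw [tE, dif_neg (by omega), if_neg (by omega)]
      rw [e]
      exact EReal.coe_lt_top x

lemma forward_aux (N : ℕ) (t : Fin N → ℝ) (ht : StrictMono t)
    (m : ℕ) (s : Fin m → ℝ) (α : Fin m → ℕ) (hα : ∀ i, α i ≤ N)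
    (hmem : ∀ i, s i ∈ openPiece N t (α i))
    (σ : Equiv.Perm ℝ)
    (h1 : AlgInvariant (pcAlgOn (Set.range t)) σ)
    (h2 : AlgInvariant (pcAlgOn (Set.range t)) σ.symm)
    (h3 : AlgInvariant (pcAlgOn (Set.range t ∪ Set.range s)) σ)
    (h4 : AlgInvariant (pcAlgOn (Set.range t ∪ Set.range s)) σ.symm) :
    ∀ x ∈ ⋃ i, openPiece N t (α i), σ x ∈ ⋃ i, openPiece N t (α i) := by
  classical
  set T := Set.range t with hT
  set T' := Set.range t ∪ Set.range s with hT'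
  have hTfin : T.Finite := Set.finite_range t
  have hT'fin : T'.Finite := (Set.finite_range t).union (Set.finite_range s)
  have hσT : ∀ u ∈ T, σ u ∈ T := maps_into T hTfin σ h2
  have hσT' : ∀ u ∈ T', σ u ∈ T' := maps_into T' hT'fin σ h4
  have hσinvT : ∀ u ∈ T, σ.symm u ∈ T := maps_into T hTfin σ.symm h1
  intro x hx
  obtain ⟨i, hxi⟩ := Set.mem_iUnion.mp hx
  have hsT : ∀ j : Fin m, s j ∉ T := by
    rintro j ⟨l, hl⟩
    exact t_not_mem_openPiece N t ht (hα j) l (hl ▸ hmem j)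
  have hxT : x ∉ T := by
    rintro ⟨l, hl⟩
    exact t_not_mem_openPiece N t ht (hα i) l (hl ▸ hxi)
  -- rel T x (s i)
  have hrel : ∀ h ∈ pcAlgOn T, h x = h (s i) := by
    intro h hh
    refine (mem_pcAlgOn_iff.mp hh) x (s i) hxT (hsT i) ?_
    rintro u ⟨l, hl⟩ humem
    exact t_not_mem_openPiece N t ht (hα i) l
      (hl ▸ openPiece_convex N t (α i) hxi (hmem i) humem)
  have hrel2 : ∀ h ∈ pcAlgOn T, h (σ x) = h (σ (s i)) := by
    intro h hh
    exact hrel (h ∘ σ) (h1 h hh)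
  have hσsi : σ (s i) ∈ T' := hσT' (s i) (Or.inr ⟨i, rfl⟩)
  have hσsiT : σ (s i) ∉ T := by
    intro hT0
    have := hσinvT _ hT0
    rw [Equiv.symm_apply_apply] at this
    exact hsT i this
  obtain ⟨j, hj⟩ : ∃ j, s j = σ (s i) := hσsi.resolve_left hσsiT
  have hσxT : σ x ∉ T := by
    intro h0
    have := hσinvT _ h0
    rw [Equiv.symm_apply_apply] at this
    exact hxT this
  by_cases hcase : σ x = s j
  · exact Set.mem_iUnion.mpr ⟨j, hcase ▸ hmem j⟩
  · have hsep : ∀ u ∈ T, u ∉ Set.Icc (min (σ x) (s j)) (max (σ x) (s j)) := by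
      intro u hu humem
      obtain ⟨h, hh, hne⟩ := sep_between T (σ x) (s j) hσxT (hsT j) u hu humem
      apply hne
      rw [hj]
      exact hrel2 h hh
    exact Set.mem_iUnion.mpr
      ⟨j, mem_openPiece_of_near N t (α j) (hα j) (s j) (σ x) (hmem j) hσxT hsep⟩

/-- if the added jump points `s i` lie in the open intervals `I_{α i}` and both
`𝒜` and `𝒜_S` are invariant under the bijection `σ` and its inverse, then
`σ(⋃ᵢ I_{α i}) = ⋃ᵢ I_{α i}`. -/
theorem statement6 (N : ℕ) (t : Fin N → ℝ) (ht : StrictMono t)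
    (m : ℕ) (s : Fin m → ℝ) (hs : Function.Injective s)
    (α : Fin m → ℕ) (hα : ∀ i, α i ≤ N) (hmem : ∀ i, s i ∈ openPiece N t (α i))
    (σ : Equiv.Perm ℝ)
    (h1 : AlgInvariant (pcAlgOn (Set.range t)) σ)
    (h2 : AlgInvariant (pcAlgOn (Set.range t)) σ.symm)
    (h3 : AlgInvariant (pcAlgOn (Set.range t ∪ Set.range s)) σ)
    (h4 : AlgInvariant (pcAlgOn (Set.range t ∪ Set.range s)) σ.symm) :
    σ '' (⋃ i, openPiece N t (α i)) = ⋃ i, openPiece N t (α i) := by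
  have fwd := forward_aux N t ht m s α hα hmem σ h1 h2 h3 h4
  have bwd := forward_aux N t ht m s α hα hmem σ.symm h2 h1 h4 h3
  apply Set.Subset.antisymm
  · rintro _ ⟨x, hx, rfl⟩
    exact fwd x hx
  · intro y hy
    exact ⟨σ.symm y, bwd y hy, σ.apply_symm_apply y⟩

end PaperTRS
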